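/- Let K be a field of characteristic ≠ 2 and S = K[a,b,c,d,x,y,z,t] the polynomial ring in 8 variables. Let I_W ⊂ S be the ideal generated by g₁ = ax+by, g₂ = az+bt+cx+dy, g₃ = cz+dt, and set Δ₁ = ad−bc, Δ₂ = xt−yz. Then the colon ideals with respect to the two spinor minors coincide: (I_W : Δ₁) = (I_W : Δ₂). (This common colon ideal is the prime ideal I_Σ of the component Σ of W = V(I_W) corresponding to one ruling of the quadric surface.) -/

import Mathlib

open MvPolynomial

namespace Statement16

variable (K : Type*) [Field K]

/-- The polynomial ring `K[a,b,c,d,x,y,z,t]`. -/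
abbrev R8 := MvPolynomial (Fin 8) K
/-- The polynomial ring `K[u₀,u₁,u₂,u₃,v₀,v₁]`. -/
abbrev T6 := MvPolynomial (Fin 6) K

noncomputable def g1 : R8 K := X 0 * X 4 + X 1 * X 5
noncomputable def g2 : R8 K := X 0 * X 6 + X 1 * X 7 + X 2 * X 4 + X 3 * X 5
noncomputable def g3 : R8 K := X 2 * X 6 + X 3 * X 7
noncomputable def mu1 : R8 K := X 0 * X 7 - X 2 * X 5
noncomputable def mu2 : R8 K := X 0 * X 6 + X 3 * X 5
noncomputable def mu4 : R8 K := X 1 * X 6 - X 3 * X 4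
noncomputable def IW : Ideal (R8 K) := Ideal.span {g1 K, g2 K, g3 K}
noncomputable def J0 : Ideal (R8 K) :=
  Ideal.span {g1 K, g2 K, g3 K, mu1 K, mu2 K, mu4 K}
noncomputable def D1 : R8 K := X 0 * X 3 - X 1 * X 2
noncomputable def D2 : R8 K := X 4 * X 7 - X 5 * X 6
noncomputable def th : Fin 4 → Fin 2 → R8 K :=
  ![![X 0, -(X 5)], ![X 1, X 4], ![X 2, -(X 7)], ![X 3, X 6]]
noncomputable def Th (n : Fin 4 × Fin 2 → ℕ) : R8 K :=
  ∏ p : Fin 4 × Fin 2, th K p.1 p.2 ^ n p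

def dataF (n : Fin 4 × Fin 2 → ℕ) : Fin 6 → ℕ := fun j =>
  if j = 0 then n (0,0) + n (0,1) else
  if j = 1 then n (1,0) + n (1,1) else
  if j = 2 then n (2,0) + n (2,1) else
  if j = 3 then n (3,0) + n (3,1) else
  if j = 4 then n (0,0) + n (1,0) + n (2,0) + n (3,0) else
  n (0,1) + n (1,1) + n (2,1) + n (3,1)
def canN (e : Fin 6 → ℕ) : Fin 4 × Fin 2 → ℕ := fun p =>
  if p = (0,0) then min (e 0) (e 4) else
  if p = (0,1) then e 0 - min (e 0) (e 4) else
  if p = (1,0) then min (e 1) (e 4 - e 0) else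
  if p = (1,1) then e 1 - min (e 1) (e 4 - e 0) else
  if p = (2,0) then min (e 2) (e 4 - e 0 - e 1) else
  if p = (2,1) then e 2 - min (e 2) (e 4 - e 0 - e 1) else
  if p = (3,0) then min (e 3) (e 4 - e 0 - e 1 - e 2) else
  e 3 - min (e 3) (e 4 - e 0 - e 1 - e 2)
def meas (n : Fin 4 × Fin 2 → ℕ) : ℕ := n (1,0) + 2 * n (2,0) + 3 * n (3,0)


lemma g1_mem_IW : g1 K ∈ IW K := Ideal.subset_span (by simp)
lemma g2_mem_IW : g2 K ∈ IW K := Ideal.subset_span (by simp)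
lemma g3_mem_IW : g3 K ∈ IW K := Ideal.subset_span (by simp)

lemma comb_mem (p q r : R8 K) : p * g1 K + q * g2 K + r * g3 K ∈ IW K := by
  exact add_mem (add_mem (Ideal.mul_mem_left _ _ (g1_mem_IW K))
    (Ideal.mul_mem_left _ _ (g2_mem_IW K))) (Ideal.mul_mem_left _ _ (g3_mem_IW K))

lemma mul_D_mem : ∀ h ∈ J0 K, h * D1 K ∈ IW K ∧ h * D2 K ∈ IW K := by
  intro h hh
  refine Submodule.span_induction ?_ ?_ ?_ ?_ hh
  · rintro g hg
    simp only [Set.mem_insert_iff, Set.mem_singleton_iff] at hg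
    rcases hg with rfl | rfl | rfl | rfl | rfl | rfl
    · exact ⟨Ideal.mul_mem_right _ _ (g1_mem_IW K), Ideal.mul_mem_right _ _ (g1_mem_IW K)⟩
    · exact ⟨Ideal.mul_mem_right _ _ (g2_mem_IW K), Ideal.mul_mem_right _ _ (g2_mem_IW K)⟩
    · exact ⟨Ideal.mul_mem_right _ _ (g3_mem_IW K), Ideal.mul_mem_right _ _ (g3_mem_IW K)⟩
    · constructor
      · have : mu1 K * D1 K = (X 2 * X 2) * g1 K + (-(X 0 * X 2)) * g2 K + (X 0 * X 0) * g3 K := by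
          simp only [mu1, D1, g1, g2, g3]; try ring
        rw [this]; exact comb_mem K _ _ _
      · have : mu1 K * D2 K = (X 7 * X 7) * g1 K + (-(X 5 * X 7)) * g2 K + (X 5 * X 5) * g3 K := by
          simp only [mu1, D2, g1, g2, g3]; try ring
        rw [this]; exact comb_mem K _ _ _
    · constructor
      · have : mu2 K * D1 K = (-(X 2 * X 3)) * g1 K + (X 0 * X 3) * g2 K + (-(X 0 * X 1)) * g3 K := by
          simp only [mu2, D1, g1, g2, g3]; try ring
        rw [this]; exact comb_mem K _ _ _
      · have : mu2 K * D2 K = (X 6 * X 7) * g1 K + (-(X 5 * X 6)) * g2 K + (X 4 * X 5) * g3 K := by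
          simp only [mu2, D2, g1, g2, g3]; try ring
        rw [this]; exact comb_mem K _ _ _
    · constructor
      · have : mu4 K * D1 K = (-(X 3 * X 3)) * g1 K + (X 1 * X 3) * g2 K + (-(X 1 * X 1)) * g3 K := by
          simp only [mu4, D1, g1, g2, g3]; try ring
        rw [this]; exact comb_mem K _ _ _
      · have : mu4 K * D2 K = (-(X 6 * X 6)) * g1 K + (X 4 * X 6) * g2 K + (-(X 4 * X 4)) * g3 K := by
          simp only [mu4, D2, g1, g2, g3]; try ring
        rw [this]; exact comb_mem K _ _ _
  · simp
  · rintro p q - - ⟨h1, h2⟩ ⟨h3, h4⟩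
    exact ⟨by rw [add_mul]; exact add_mem h1 h3, by rw [add_mul]; exact add_mem h2 h4⟩
  · rintro r p - ⟨h1, h2⟩
    exact ⟨by rw [smul_eq_mul, mul_assoc]; exact Ideal.mul_mem_left _ _ h1,
           by rw [smul_eq_mul, mul_assoc]; exact Ideal.mul_mem_left _ _ h2⟩

lemma swap_mem (i k : Fin 4) (hki : k < i) :
    th K i 0 * th K k 1 - th K k 0 * th K i 1 ∈ J0 K := by
  have m1 : g1 K ∈ J0 K := Ideal.subset_span (by simp)
  have m2 : g2 K ∈ J0 K := Ideal.subset_span (by simp)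
  have m3 : g3 K ∈ J0 K := Ideal.subset_span (by simp)
  have m4 : mu1 K ∈ J0 K := Ideal.subset_span (by simp)
  have m5 : mu2 K ∈ J0 K := Ideal.subset_span (by simp)
  have m6 : mu4 K ∈ J0 K := Ideal.subset_span (by simp)
  fin_cases i <;> fin_cases k
  · exact absurd hki (by decide)
  · exact absurd hki (by decide)
  · exact absurd hki (by decide)
  · exact absurd hki (by decide)
  · convert neg_mem m1 using 1; simp [th, g1]; try ring
  · exact absurd hki (by decide)
  · exact absurd hki (by decide)
  · exact absurd hki (by decide)
  · convert m4 using 1; simp [th, mu1]; try ring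
  · convert sub_mem m2 m5 using 1; simp [th, g2, mu2]; try ring
  · exact absurd hki (by decide)
  · exact absurd hki (by decide)
  · convert neg_mem m5 using 1; simp [th, mu2]; try ring
  · convert neg_mem m6 using 1; simp [th, mu4]; try ring
  · convert neg_mem m3 using 1; simp [th, g3]; try ring
  · exact absurd hki (by decide)


lemma Th_add (a b : Fin 4 × Fin 2 → ℕ) : Th K (a + b) = Th K a * Th K b := by
  simp only [Th, Pi.add_apply, pow_add, Finset.prod_mul_distrib]

lemma Th_single (p : Fin 4 × Fin 2) : Th K (Pi.single p 1) = th K p.1 p.2 := by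
  rw [Th, Finset.prod_eq_single p]
  · simp
  · intro q _ hq; simp [Pi.single_apply, hq]
  · intro h; exact absurd (Finset.mem_univ p) h

lemma dataF_add (a b : Fin 4 × Fin 2 → ℕ) : dataF (a + b) = dataF a + dataF b := by
  funext j; fin_cases j <;> simp [dataF, -Prod.mk_zero_zero, -Prod.mk_one_one] <;> omega

lemma meas_add (a b : Fin 4 × Fin 2 → ℕ) : meas (a + b) = meas a + meas b := by
  simp only [meas, Pi.add_apply]; omega

lemma can_of_free (n : Fin 4 × Fin 2 → ℕ)
    (hfree : ∀ i k : Fin 4, k < i → n (i,0) = 0 ∨ n (k,1) = 0) :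
    canN (dataF n) = n := by
  have h10 : min (n (1,0)) (n (0,1)) = 0 := by rcases hfree 1 0 (by decide) with h|h <;> omega
  have h20 : min (n (2,0)) (n (0,1)) = 0 := by rcases hfree 2 0 (by decide) with h|h <;> omega
  have h30 : min (n (3,0)) (n (0,1)) = 0 := by rcases hfree 3 0 (by decide) with h|h <;> omega
  have h21 : min (n (2,0)) (n (1,1)) = 0 := by rcases hfree 2 1 (by decide) with h|h <;> omega
  have h31 : min (n (3,0)) (n (1,1)) = 0 := by rcases hfree 3 1 (by decide) with h|h <;> omega
  have h32 : min (n (3,0)) (n (2,1)) = 0 := by rcases hfree 3 2 (by decide) with h|h <;> omega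
  funext p
  obtain ⟨i, j⟩ := p
  fin_cases i <;> fin_cases j <;> simp [canN, dataF, -Prod.mk_zero_zero, -Prod.mk_one_one] <;> omega


lemma step' (i k : Fin 4) (hki : k < i) (n : Fin 4 × Fin 2 → ℕ)
    (hi : n (i,0) ≠ 0) (hk : n (k,1) ≠ 0)
    (hdata : dataF (Pi.single ((k,0) : Fin 4 × Fin 2) 1 + Pi.single ((i,1) : Fin 4 × Fin 2) 1)
      = dataF (Pi.single ((i,0) : Fin 4 × Fin 2) 1 + Pi.single ((k,1) : Fin 4 × Fin 2) 1))
    (hmeas : meas (Pi.single ((k,0) : Fin 4 × Fin 2) 1 + Pi.single ((i,1) : Fin 4 × Fin 2) 1)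
      < meas (Pi.single ((i,0) : Fin 4 × Fin 2) 1 + Pi.single ((k,1) : Fin 4 × Fin 2) 1)) :
    ∃ n' : Fin 4 × Fin 2 → ℕ, dataF n' = dataF n ∧ meas n' < meas n ∧
      Th K n - Th K n' ∈ J0 K := by
  have hne : ((i, (0 : Fin 2)) : Fin 4 × Fin 2) ≠ (k, (1 : Fin 2)) := fun h => by
    simpa using congrArg Prod.snd h
  set old : Fin 4 × Fin 2 → ℕ :=
    Pi.single ((i,0) : Fin 4 × Fin 2) 1 + Pi.single ((k,1) : Fin 4 × Fin 2) 1 with hold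
  set nw : Fin 4 × Fin 2 → ℕ :=
    Pi.single ((k,0) : Fin 4 × Fin 2) 1 + Pi.single ((i,1) : Fin 4 × Fin 2) 1 with hnw
  set m : Fin 4 × Fin 2 → ℕ := fun p => n p - old p with hm
  have hle : ∀ p, old p ≤ n p := by
    intro p
    rcases eq_or_ne p (i,0) with rfl | h1
    · have h : old (i,0) = 1 := by simp [hold, Pi.single_apply, hne]
      omega
    · rcases eq_or_ne p (k,1) with rfl | h2
      · have h : old (k,1) = 1 := by simp [hold, Pi.single_apply, hne.symm]
        omega
      · have h : old p = 0 := by simp [hold, Pi.single_apply, h1, h2]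
        omega
  have hn : n = m + old := by
    funext p
    have := hle p
    simp only [hm, Pi.add_apply]
    omega
  refine ⟨m + nw, ?_, ?_, ?_⟩
  · rw [dataF_add, hdata, ← dataF_add, ← hn]
  · rw [meas_add]
    conv_rhs => rw [hn, meas_add]
    omega
  · have e1 : Th K n = Th K m * (th K i 0 * th K k 1) := by
      rw [hn, Th_add, Th_add, Th_single, Th_single]
    have e2 : Th K (m + nw) = Th K m * (th K k 0 * th K i 1) := by
      rw [Th_add, Th_add, Th_single, Th_single]
    have : Th K n - Th K (m + nw)
        = (th K i 0 * th K k 1 - th K k 0 * th K i 1) * Th K m := by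
      rw [e1, e2]; ring
    rw [this]
    exact Ideal.mul_mem_right _ _ (swap_mem K i k hki)

lemma step (i k : Fin 4) (hki : k < i) (n : Fin 4 × Fin 2 → ℕ)
    (hi : n (i,0) ≠ 0) (hk : n (k,1) ≠ 0) :
    ∃ n' : Fin 4 × Fin 2 → ℕ, dataF n' = dataF n ∧ meas n' < meas n ∧
      Th K n - Th K n' ∈ J0 K := by
  fin_cases i <;> fin_cases k <;>
    first
      | exact absurd hki (by decide)
      | exact step' K _ _ hki n hi hk (by decide) (by decide)

lemma core (n : Fin 4 × Fin 2 → ℕ) :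
    Th K n - Th K (canN (dataF n)) ∈ J0 K := by
  generalize hM : meas n = N
  induction N using Nat.strong_induction_on generalizing n with
  | _ N ih =>
    by_cases hfree : ∀ i k : Fin 4, k < i → n (i,0) = 0 ∨ n (k,1) = 0
    · rw [can_of_free n hfree, sub_self]
      exact zero_mem _
    · push_neg at hfree
      obtain ⟨i, k, hki, hi, hk⟩ := hfree
      obtain ⟨n', hd, hm, hmem⟩ := step K i k hki n hi hk
      have h2 : Th K n' - Th K (canN (dataF n')) ∈ J0 K :=
        ih (meas n') (by omega) n' rfl
      rw [hd] at h2
      have e : Th K n - Th K (canN (dataF n))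
          = (Th K n - Th K n') + (Th K n' - Th K (canN (dataF n))) := by ring
      rw [e]
      exact add_mem hmem h2


noncomputable def phi : R8 K →ₐ[K] T6 K :=
  aeval (fun i : Fin 8 =>
    if i = 0 then X 0 * X 4 else
    if i = 1 then X 1 * X 4 else
    if i = 2 then X 2 * X 4 else
    if i = 3 then X 3 * X 4 else
    if i = 4 then X 1 * X 5 else
    if i = 5 then -(X 0 * X 5) else
    if i = 6 then X 3 * X 5 else -(X 2 * X 5))

def nOf (e : Fin 8 →₀ ℕ) : Fin 4 × Fin 2 → ℕ := fun p =>
  if p = (0,0) then e 0 else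
  if p = (1,0) then e 1 else
  if p = (2,0) then e 2 else
  if p = (3,0) then e 3 else
  if p = (0,1) then e 5 else
  if p = (1,1) then e 4 else
  if p = (2,1) then e 7 else e 6

lemma mono_eq_prod (e : Fin 8 →₀ ℕ) :
    (monomial e (1:K)) = ∏ i : Fin 8, X i ^ e i := by
  rw [monomial_eq, C_1, one_mul, Finsupp.prod_fintype]
  intro i; exact pow_zero _

lemma mono_Th (e : Fin 8 →₀ ℕ) :
    (monomial e (1:K)) = (-1 : R8 K) ^ (e 5 + e 7) * Th K (nOf e) := by
  rw [mono_eq_prod, Fin.prod_univ_eight]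
  rw [Th, Fintype.prod_prod_type]
  simp only [Fin.prod_univ_four, Fin.prod_univ_two]
  simp only [th, nOf, Matrix.cons_val_zero, Matrix.cons_val_one, Matrix.head_cons,
    Matrix.cons_val_two, Matrix.cons_val_three, Matrix.tail_cons, Prod.mk.injEq, Fin.reduceEq, and_self, and_true, true_and, false_and, and_false, if_true, if_false, reduceIte]
  rw [neg_pow (X 5 : R8 K), neg_pow (X 7 : R8 K), pow_add]
  ring_nf
  rw [pow_mul', pow_mul']
  simp

lemma phi_Th (n : Fin 4 × Fin 2 → ℕ) :
    phi K (Th K n)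
      = monomial (Finsupp.equivFunOnFinite.symm (dataF n)) (1:K) := by
  rw [Th, map_prod]
  rw [monomial_eq, C_1, one_mul, Finsupp.prod_fintype]
  swap
  · intro i; exact pow_zero _
  simp only [Finsupp.coe_equivFunOnFinite_symm]
  rw [Fin.prod_univ_six, Fintype.prod_prod_type]
  simp only [Fin.prod_univ_four, Fin.prod_univ_two]
  simp only [map_pow, phi, th, Matrix.cons_val_zero, Matrix.cons_val_one, Matrix.head_cons,
    Matrix.cons_val_two, Matrix.cons_val_three, Matrix.tail_cons, aeval_X, map_neg]
  simp only [Fin.reduceEq, if_true, if_false, reduceIte]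
  simp only [neg_neg]
  simp only [dataF, Prod.mk.injEq, Fin.reduceEq, and_self, and_true, true_and, false_and, and_false, if_true, if_false, reduceIte]
  ring

noncomputable def L : T6 K → R8 K :=
  fun q => ∑ e ∈ q.support, coeff e q • Th K (canN e)

lemma L_eq_sum (q : T6 K) (s : Finset (Fin 6 →₀ ℕ)) (hs : q.support ⊆ s) :
    L K q = ∑ e ∈ s, coeff e q • Th K (canN e) := by
  refine Finset.sum_subset hs (fun e _ he => ?_)
  rw [notMem_support_iff.mp he, zero_smul]

lemma L_add (p q : T6 K) : L K (p + q) = L K p + L K q := by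
  rw [L_eq_sum K (p + q) (p.support ∪ q.support ∪ (p+q).support) (by intro i hi; simp [hi]),
      L_eq_sum K p (p.support ∪ q.support ∪ (p+q).support) (by intro i hi; simp [hi]),
      L_eq_sum K q (p.support ∪ q.support ∪ (p+q).support) (by intro i hi; simp [hi]),
      ← Finset.sum_add_distrib]
  refine Finset.sum_congr rfl fun e _ => ?_
  rw [coeff_add, add_smul]

lemma L_zero : L K 0 = 0 := by simp [L]

lemma L_monomial (e : Fin 6 →₀ ℕ) (c : K) :
    L K (monomial e c) = c • Th K (canN e) := by
  classical
  by_cases hc : c = 0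
  · subst hc; rw [monomial_zero, L_zero, zero_smul]
  · rw [L, support_monomial, if_neg hc, Finset.sum_singleton, coeff_monomial, if_pos rfl]

lemma key (f : R8 K) : f - L K (phi K f) ∈ J0 K := by
  induction f using MvPolynomial.induction_on' with
  | monomial e a =>
    have hsplit : (monomial e a : R8 K) = C a * monomial e (1:K) := by
      rw [C_mul_monomial, mul_one]
    have hphi1 : phi K (monomial e (1:K))
        = monomial (Finsupp.equivFunOnFinite.symm (dataF (nOf e))) ((-1:K) ^ (e 5 + e 7)) := by
      rw [mono_Th, map_mul, map_pow, map_neg, map_one, phi_Th]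
      rw [show (-1 : T6 K) = C (-1 : K) from by simp, ← map_pow, C_mul_monomial, mul_one]
    have hphi : phi K (monomial e a)
        = monomial (Finsupp.equivFunOnFinite.symm (dataF (nOf e)))
            (a * (-1:K) ^ (e 5 + e 7)) := by
      rw [hsplit, map_mul, hphi1, show phi K (C a) = C a from by
        rw [phi, aeval_C, algebraMap_eq], C_mul_monomial]
    rw [hphi, L_monomial]
    have hcoe : ⇑(Finsupp.equivFunOnFinite.symm (dataF (nOf e))) = dataF (nOf e) := by
      funext j; simp
    rw [hcoe]
    have hrepr : (monomial e a : R8 K)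
        = C (a * (-1:K) ^ (e 5 + e 7)) * Th K (nOf e) := by
      rw [hsplit, mono_Th, map_mul, ← mul_assoc]
      congr 1
      rw [show (-1 : R8 K) = C (-1 : K) from by simp, ← map_pow, ← map_mul]
    rw [hrepr, smul_eq_C_mul, ← mul_sub]
    exact Ideal.mul_mem_left _ _ (core K _)
  | add p q hp hq =>
    rw [map_add, L_add]
    have e : p + q - (L K (phi K p) + L K (phi K q))
        = (p - L K (phi K p)) + (q - L K (phi K q)) := by ring
    rw [e]
    exact add_mem hp hq

lemma kernel (f : R8 K) (h : phi K f = 0) : f ∈ J0 K := by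
  have h2 := key K f
  rwa [h, L_zero, sub_zero] at h2


lemma phi_IW : ∀ g ∈ IW K, phi K g = 0 := by
  intro g hg
  refine Submodule.span_induction ?_ ?_ ?_ ?_ hg
  · rintro r hr
    simp only [Set.mem_insert_iff, Set.mem_singleton_iff] at hr
    rcases hr with rfl | rfl | rfl
    · simp [phi, g1]; ring
    · simp [phi, g2]; ring
    · simp [phi, g3]; ring
  · simp
  · intro p q _ _ h1 h2; rw [map_add, h1, h2, add_zero]
  · intro r p _ h1; rw [smul_eq_mul, map_mul, h1, mul_zero]

noncomputable def pt : Fin 6 → K := fun j => if j = 1 then 0 else if j = 2 then 0 else 1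

lemma phi_D1_ne : phi K (D1 K) ≠ 0 := by
  intro h
  have h2 := congrArg (eval (pt K)) h
  simp [phi, D1, pt] at h2

lemma phi_D2_ne : phi K (D2 K) ≠ 0 := by
  intro h
  have h2 := congrArg (eval (pt K)) h
  simp [phi, D2, pt] at h2

lemma main : (IW K).colon (Ideal.span {D1 K}) = (IW K).colon (Ideal.span {D2 K}) := by
  ext f
  simp only [Ideal.mem_colon_span_singleton]
  constructor
  · intro h
    have h0 : phi K f * phi K (D1 K) = 0 := by
      rw [← map_mul]; exact phi_IW K _ h
    have hf : phi K f = 0 := by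
      rcases mul_eq_zero.mp h0 with h1 | h1
      · exact h1
      · exact absurd h1 (phi_D1_ne K)
    exact (mul_D_mem K f (kernel K f hf)).2
  · intro h
    have h0 : phi K f * phi K (D2 K) = 0 := by
      rw [← map_mul]; exact phi_IW K _ h
    have hf : phi K f = 0 := by
      rcases mul_eq_zero.mp h0 with h1 | h1
      · exact h1
      · exact absurd h1 (phi_D2_ne K)
    exact (mul_D_mem K f (kernel K f hf)).1

end Statement16

/-- In the polynomial ring `S = K[a,b,c,d,x,y,z,t]` over a
field of characteristic `≠ 2`, with `I_W = (ax+by, az+bt+cx+dy, cz+dt)` and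
spinor minors `Δ₁ = ad−bc`, `Δ₂ = xt−yz`, the colon ideals coincide:
`(I_W : Δ₁) = (I_W : Δ₂)`. -/
theorem colon_ideals_of_spinor_minors_coincide (K : Type*) [Field K]
    (hchar : (2 : K) ≠ 0)
    (a b c d x y z t : MvPolynomial (Fin 8) K)
    (hvars : (a, b, c, d, x, y, z, t) = (X 0, X 1, X 2, X 3, X 4, X 5, X 6, X 7)) :
    (Ideal.span {a*x + b*y, a*z + b*t + c*x + d*y, c*z + d*t}).colon
        (Ideal.span {a*d - b*c}) =
      (Ideal.span {a*x + b*y, a*z + b*t + c*x + d*y, c*z + d*t}).colon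
        (Ideal.span {x*t - y*z}) := by
  simp only [Prod.mk.injEq] at hvars
  obtain ⟨rfl, rfl, rfl, rfl, rfl, rfl, rfl, rfl⟩ := hvars
  exact Statement16.main K
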